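/- arXiv:1511.00567 — 4 statements merged into one kernel-verified Lean document; each statement's English description precedes it below -/
import Mathlib

section
/- Define the drop-point buffer occupancy B_c(t) = R_d·(t − α_c) for t ∈ [α_c, μ_c], B_c(t) = B_max,c − (R_p − R_d)·(t − μ_c) for t ∈ [μ_c, ω_c], and B_c(t) = M − R_p·(t − ω_c) for t ∈ [ω_c, β_c], where B_max,c = G_c − (R_d/R_p)·(G_c − M). If 0 < R_d < R_p and 0 ≤ M ≤ G_c, then B_c(t) ≤ B_max,c for all t ∈ [α_c, β_c], and B_c(μ_c) = B_max,c; i.e., the maximum buffer occupancy is attained at the instant μ_c when the ONU starts transmitting the CPE data. -/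
/-- The piecewise drop-point buffer occupancy `B` attains its maximum
`Bmax = G - (Rd/Rp) * (G - M)` at the instant `μ`, and `B t ≤ Bmax`
for all `t ∈ [α, β]`. -/
theorem buffer_max_at_mu
    (α G M Rd Rp ω β μ Bmax : ℝ) (B : ℝ → ℝ)
    (hRd : 0 < Rd) (hRdRp : Rd < Rp)
    (hM : 0 ≤ M) (hMG : M ≤ G)
    (hω : ω = α + G / Rd)
    (hβ : β = ω + M / Rp)
    (hμ : μ = β - G / Rp)
    (hBmax : Bmax = G - (Rd / Rp) * (G - M))
    (hB1 : ∀ t ∈ Set.Icc α μ, B t = Rd * (t - α))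
    (hB2 : ∀ t ∈ Set.Icc μ ω, B t = Bmax - (Rp - Rd) * (t - μ))
    (hB3 : ∀ t ∈ Set.Icc ω β, B t = M - Rp * (t - ω)) :
    (∀ t ∈ Set.Icc α β, B t ≤ Bmax) ∧ B μ = Bmax := by
  have hRp : 0 < Rp := hRd.trans hRdRp
  have hG : 0 ≤ G := hM.trans hMG
  have hαμ : α ≤ μ := by
    rw [hμ, hβ, hω]
    have h1 : G / Rp ≤ G / Rd := div_le_div_of_nonneg_left hG hRd hRdRp.le
    have h2 : 0 ≤ M / Rp := div_nonneg hM hRp.le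
    linarith
  have hμω : μ ≤ ω := by
    rw [hμ, hβ]
    have : M / Rp ≤ G / Rp := div_le_div_of_nonneg_right hMG hRp.le
    linarith
  have hωβ : ω ≤ β := by
    rw [hβ]
    have : 0 ≤ M / Rp := div_nonneg hM hRp.le
    linarith
  have hkey : Rd * (μ - α) = Bmax := by
    rw [hμ, hβ, hω, hBmax]
    field_simp
    ring
  have hBμ : B μ = Bmax := by
    rw [hB1 μ ⟨hαμ, le_refl μ⟩, hkey]
  have hMBmax : M ≤ Bmax := by
    rw [hBmax]
    have h1 : Rd / Rp ≤ 1 := (div_le_one hRp).mpr hRdRp.le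
    have h2 : 0 ≤ G - M := by linarith
    nlinarith
  refine ⟨fun t ht => ?_, hBμ⟩
  obtain ⟨htα, htβ⟩ := ht
  rcases le_or_gt t μ with h1 | h1
  · rw [hB1 t ⟨htα, h1⟩, ← hkey]
    nlinarith
  · rcases le_or_gt t ω with h2 | h2
    · rw [hB2 t ⟨h1.le, h2⟩]
      nlinarith
    · rw [hB3 t ⟨h2.le, htβ⟩]
      nlinarith
end

section
/- Define the drop-point buffer occupancy B_c(t) = R_d·(t − α_c) for t ∈ [α_c, μ_c], B_c(t) = B_max,c − (R_p − R_d)·(t − μ_c) for t ∈ [μ_c, ω_c], and B_c(t) = M − R_p·(t − ω_c) for t ∈ [ω_c, β_c], where B_max,c = G_c − (R_d/R_p)·(G_c − M). If 0 < R_d < R_p and 0 ≤ M ≤ G_c, then B_c(t) ≥ 0 for all t ∈ [α_c, β_c], and B_c(β_c) = 0. -/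
/-- The piecewise drop-point buffer occupancy `B` is nonnegative on
`[α, β]` and vanishes at `β`. -/
theorem buffer_nonneg_and_zero_at_beta
    (α G M Rd Rp ω β μ Bmax : ℝ) (B : ℝ → ℝ)
    (hRd : 0 < Rd) (hRdRp : Rd < Rp)
    (hM : 0 ≤ M) (hMG : M ≤ G)
    (hω : ω = α + G / Rd)
    (hβ : β = ω + M / Rp)
    (hμ : μ = β - G / Rp)
    (hBmax : Bmax = G - (Rd / Rp) * (G - M))
    (hB1 : ∀ t ∈ Set.Icc α μ, B t = Rd * (t - α))
    (hB2 : ∀ t ∈ Set.Icc μ ω, B t = Bmax - (Rp - Rd) * (t - μ))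
    (hB3 : ∀ t ∈ Set.Icc ω β, B t = M - Rp * (t - ω)) :
    (∀ t ∈ Set.Icc α β, 0 ≤ B t) ∧ B β = 0 := by
  have hRp : 0 < Rp := hRd.trans hRdRp
  have hG : 0 ≤ G := hM.trans hMG
  have h1 : (G - M) / Rp ≤ G / Rp := by gcongr <;> linarith
  have h2 : G / Rp ≤ G / Rd := div_le_div_of_nonneg_left hG hRd hRdRp.le
  have hMRp : 0 ≤ M / Rp := div_nonneg hM hRp.le
  have hαμ : α ≤ μ := by rw [hμ, hβ, hω]; linarith
  have hωμ : ω - μ = (G - M) / Rp := by rw [hμ, hβ]; ring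
  have hβω : β - ω = M / Rp := by rw [hβ]; ring
  have hμω : μ ≤ ω := by
    have : 0 ≤ (G - M) / Rp := div_nonneg (by linarith) hRp.le
    linarith
  have hωβ : ω ≤ β := by
    have : 0 ≤ M / Rp := div_nonneg hM hRp.le
    linarith
  have hkey : Bmax - (Rp - Rd) * ((G - M) / Rp) = M := by
    rw [hBmax]; field_simp; ring
  have hβzero : B β = 0 := by
    rw [hB3 β ⟨hωβ, le_refl β⟩, hβω]
    field_simp
    ring
  refine ⟨fun t ht => ?_, hβzero⟩
  obtain ⟨ht1, ht2⟩ := ht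
  rcases le_or_gt t μ with h | h
  · rw [hB1 t ⟨ht1, h⟩]
    nlinarith
  · rcases le_or_gt t ω with h' | h'
    · rw [hB2 t ⟨h.le, h'⟩]
      nlinarith [hωμ ▸ hkey]
    · rw [hB3 t ⟨h'.le, ht2⟩]
      have : M / Rp * Rp = M := div_mul_cancel₀ M hRp.ne'
      nlinarith
end

section
/- Let E ≥ 1, R_d > 0, R_p > 0 with E·R_d ≤ R_p, let s_1, …, s_E ∈ ℝ and G_1, …, G_E ≥ 0, and define the cumulative fluid arrival function A(t) = Σ_{c=1}^E R_d · min( max(t − s_c, 0), G_c/R_d ). Let ω = max over c of (s_c + G_c/R_d) and μ = ω − (Σ_{c=1}^E G_c)/R_p. Then for all t ∈ [μ, ω], A(t) ≥ R_p·(t − μ); i.e., an ONU draining the multiplexed CPE fluid at rate R_p starting at μ never transmits more data than has arrived. -/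
/-- Fluid model of multiplexed CPE transmissions: an ONU draining the
multiplexed CPE fluid at rate `Rp` starting at `μ = ω - (∑ G)/Rp` never
transmits more data than has arrived, i.e., `A t ≥ Rp * (t - μ)` for all
`t ∈ [μ, ω]`. -/
theorem multiplexed_fluid_feasible
    (E : ℕ) (hE : 1 ≤ E)
    (Rd Rp : ℝ) (hRd : 0 < Rd) (hRp : 0 < Rp)
    (hrate : (E : ℝ) * Rd ≤ Rp)
    (s G : ℕ → ℝ) (hG : ∀ c, 0 ≤ G c)
    (A : ℝ → ℝ)
    (hA : ∀ t, A t = ∑ c ∈ Finset.Icc 1 E,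
      Rd * min (max (t - s c) 0) (G c / Rd))
    (ω μ : ℝ)
    (hω : ω = (Finset.Icc 1 E).sup'
      (Finset.nonempty_Icc.mpr hE) (fun c => s c + G c / Rd))
    (hμ : μ = ω - (∑ c ∈ Finset.Icc 1 E, G c) / Rp) :
    ∀ t ∈ Set.Icc μ ω, A t ≥ Rp * (t - μ) := by
  intro t ht
  obtain ⟨htμ, htω⟩ := ht
  have hsum : ∀ c ∈ Finset.Icc 1 E,
      G c - Rd * (ω - t) ≤ Rd * min (max (t - s c) 0) (G c / Rd) := by
    intro c hc
    have hωc : s c + G c / Rd ≤ ω := hω ▸ Finset.le_sup' (fun c => s c + G c / Rd) hc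
    have h1 : G c / Rd - (ω - t) ≤ max (t - s c) 0 :=
      le_max_of_le_left (by linarith)
    have h2 : G c / Rd - (ω - t) ≤ G c / Rd := by linarith
    have hm := mul_le_mul_of_nonneg_left (le_min h1 h2) hRd.le
    have hdiv : Rd * (G c / Rd) = G c := by field_simp
    nlinarith [hm]
  have hA' : ∑ c ∈ Finset.Icc 1 E, (G c - Rd * (ω - t)) ≤ A t := by
    rw [hA]; exact Finset.sum_le_sum hsum
  rw [Finset.sum_sub_distrib, Finset.sum_const, Nat.card_Icc] at hA'
  have hcard : ((E + 1 - 1 : ℕ) : ℝ) = (E : ℝ) := by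
    norm_num
  have hμ' : (∑ c ∈ Finset.Icc 1 E, G c) = Rp * (ω - μ) := by
    field_simp at hμ ⊢
    linarith
  have hωt : 0 ≤ ω - t := by linarith
  rw [nsmul_eq_mul, hcard] at hA'
  nlinarith [mul_le_mul_of_nonneg_right hrate hωt]
end

section
/- Let g_p, g_d, τ, δ_1, δ_2, G_1, G_2, M ∈ ℝ and 0 < R_d < R_p. Define the completion times for the two transmission orders with back-to-back PON transmission as T^{12} = 3g_p + g_d + 2τ + 2δ_1 + G_1/R_d + (M + G_2)/R_p and T^{21} = 3g_p + g_d + 2τ + 2δ_2 + G_2/R_d + (M + G_1)/R_p. Then T^{12} ≤ T^{21} if and only if G_1 ≤ G_2 + 2·(δ_2 − δ_1)/(1/R_d − 1/R_p); i.e., transmitting CPE 1's data first yields the shorter completion time exactly when G_1 is at most the threshold G_1^{th2}. -/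
/-- Transmitting CPE 1's data first yields the shorter completion time,
`T¹² ≤ T²¹`, iff `G₁ ≤ G₂ + 2 * (δ₂ - δ₁) / (1/Rd - 1/Rp)`. -/
theorem order12_shorter_iff
    (gp gd τ δ₁ δ₂ G₁ G₂ M Rd Rp T12 T21 : ℝ)
    (hRd : 0 < Rd) (hRdRp : Rd < Rp)
    (hT12 : T12 = 3 * gp + gd + 2 * τ + 2 * δ₁ + G₁ / Rd + (M + G₂) / Rp)
    (hT21 : T21 = 3 * gp + gd + 2 * τ + 2 * δ₂ + G₂ / Rd + (M + G₁) / Rp) :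
    T12 ≤ T21 ↔ G₁ ≤ G₂ + 2 * (δ₂ - δ₁) / (1 / Rd - 1 / Rp) := by
  have hRp : (0:ℝ) < Rp := hRd.trans hRdRp
  have hc : (0:ℝ) < 1 / Rd - 1 / Rp :=
    sub_pos.mpr (one_div_lt_one_div_of_lt hRd hRdRp)
  have h2 : G₁ ≤ G₂ + 2 * (δ₂ - δ₁) / (1 / Rd - 1 / Rp) ↔
      (G₁ - G₂) * (1 / Rd - 1 / Rp) ≤ 2 * (δ₂ - δ₁) := by
    rw [← sub_le_iff_le_add', le_div_iff₀ hc]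
  rw [hT12, hT21, h2]
  constructor <;> intro h <;> (ring_nf at h ⊢; linarith)
end
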